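/- Define C(m) = (1+b)^{−1} b^{[m]} (b + ([m] − m + 1/2)(1−b)) for m ∈ ℝ and b ∈ (0,1), where [·] is the nearest integer function. Then C is positive, continuous, and monotone decreasing in m, and satisfies the identity b^{−[m]} C(m) = 1 − b^{[m]} C(−m) for all m ∈ ℝ. -/

import Mathlib

open Set

/-- If two integers are both within 1/2 of `m`, the expression agrees. -/
lemma agree_aux (b : ℝ) (hb0 : 0 < b) (m : ℝ) (n n' : ℤ)
    (hn : |m - n| ≤ 1 / 2) (hn' : |m - n'| ≤ 1 / 2) :
    b ^ n * (b + ((n : ℝ) - m + 1 / 2) * (1 - b)) =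
      b ^ n' * (b + ((n' : ℝ) - m + 1 / 2) * (1 - b)) := by
  have hbne : b ≠ 0 := ne_of_gt hb0
  obtain ⟨h1, h2⟩ := abs_le.1 hn
  obtain ⟨h3, h4⟩ := abs_le.1 hn'
  have hcase : n' = n ∨ n' = n + 1 ∨ n' = n - 1 := by
    have hl : (-1 : ℝ) ≤ (n' : ℝ) - n := by linarith
    have hr : ((n' : ℝ) - n) ≤ 1 := by linarith
    have hl' : (-1 : ℤ) ≤ n' - n := by exact_mod_cast (by push_cast; linarith : (-1 : ℝ) ≤ ((n' - n : ℤ) : ℝ))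
    have hr' : n' - n ≤ (1 : ℤ) := by exact_mod_cast (by push_cast; linarith : ((n' - n : ℤ) : ℝ) ≤ 1)
    omega
  rcases hcase with rfl | rfl | rfl
  · rfl
  · have hm : m = (n : ℝ) + 1 / 2 := by push_cast at h3 ⊢; linarith
    subst hm
    rw [zpow_add_one₀ hbne]
    push_cast
    ring
  · have hm : m = (n : ℝ) - 1 / 2 := by push_cast at h4 ⊢; linarith
    subst hm
    have : b ^ n = b ^ (n - 1) * b := by
      rw [← zpow_add_one₀ hbne (n - 1), show n - 1 + 1 = n by ring]
    rw [this]
    push_cast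
    ring

theorem stmt_6 (b : ℝ) (hb0 : 0 < b) (hb1 : b < 1)
    (nint : ℝ → ℤ) (hnint : ∀ t : ℝ, |t - nint t| ≤ 1 / 2)
    (C : ℝ → ℝ)
    (hC : ∀ m : ℝ, C m = (1 + b)⁻¹ * b ^ (nint m) *
      (b + ((nint m : ℝ) - m + 1 / 2) * (1 - b))) :
    (∀ m : ℝ, 0 < C m) ∧ Continuous C ∧ Antitone C ∧
    ∀ m : ℝ, b ^ (-(nint m)) * C m = 1 - b ^ (nint m) * C (-m) := by
  have hbne : b ≠ 0 := ne_of_gt hb0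
  have h1b : (0 : ℝ) < 1 + b := by linarith
  -- canonical form via `round`
  have hC' : ∀ m : ℝ, C m = (1 + b)⁻¹ * (b ^ (round m) *
      (b + ((round m : ℝ) - m + 1 / 2) * (1 - b))) := by
    intro m
    rw [hC m, mul_assoc,
      agree_aux b hb0 m (nint m) (round m) (hnint m) (abs_sub_round m)]
  refine ⟨?_, ?_, ?_, ?_⟩
  · -- positivity
    intro m
    rw [hC m]
    have h := (abs_le.1 (hnint m)).2
    have hfac : (0 : ℝ) < b + ((nint m : ℝ) - m + 1 / 2) * (1 - b) := by
      have : (0 : ℝ) ≤ ((nint m : ℝ) - m + 1 / 2) * (1 - b) :=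
        mul_nonneg (by linarith) (by linarith)
      linarith
    exact mul_pos (mul_pos (inv_pos.2 h1b) (zpow_pos hb0 _)) hfac
  · -- continuity
    set F : ℝ → ℝ := fun x => b ^ (-x) * (b + (1 - x) * (1 - b)) with hF_def
    have hCeq : C = fun m : ℝ => (1 + b)⁻¹ * (b ^ (m + 1 / 2) *
        (F ∘ Int.fract) (m + 1 / 2)) := by
      funext m
      rw [hC' m, round_eq]
      set u : ℝ := m + 1 / 2 with hu
      simp only [Function.comp_apply, hF_def, Int.fract]
      have e1 : b ^ u * b ^ (-(u - (⌊u⌋ : ℝ))) = b ^ ((⌊u⌋ : ℤ) : ℝ) := by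
        rw [← Real.rpow_add hb0]; ring_nf
      rw [← mul_assoc (b ^ u), e1, Real.rpow_intCast]
      have e2 : (1 : ℝ) - (u - ⌊u⌋) = (⌊u⌋ : ℝ) - m + 1 / 2 := by rw [hu]; ring
      rw [e2]
      try ring
    rw [hCeq]
    have hexp : Continuous fun x : ℝ => b ^ x := by
      simp only [Real.rpow_def_of_pos hb0]
      exact Real.continuous_exp.comp (continuous_const.mul continuous_id)
    have hFc : Continuous F :=
      (hexp.comp continuous_neg).mul (continuous_const.add
        ((continuous_const.sub continuous_id).mul continuous_const))
    have hF01 : F 0 = F 1 := by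
      simp only [hF_def, neg_zero, Real.rpow_zero]
      rw [show (-1 : ℝ) = ((-1 : ℤ) : ℝ) by norm_num, Real.rpow_intCast, zpow_neg, zpow_one]
      field_simp
      ring
    have hcomp : Continuous (F ∘ Int.fract) :=
      ContinuousOn.comp_fract'' hFc.continuousOn hF01
    exact continuous_const.mul ((hexp.comp (continuous_id.add continuous_const)).mul
      (hcomp.comp (continuous_id.add continuous_const)))
  · -- antitone
    intro m m' hmm'
    rw [hC' m, hC' m']
    set n : ℤ := round m with hn
    set n' : ℤ := round m' with hn'
    have hnle : n ≤ n' := by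
      rw [hn, hn', round_eq, round_eq]
      exact Int.floor_le_floor (by linarith)
    have hm1 := (abs_le.1 (abs_sub_round m)).1
    have hm2 := (abs_le.1 (abs_sub_round m)).2
    have hm1' := (abs_le.1 (abs_sub_round m')).1
    have hm2' := (abs_le.1 (abs_sub_round m')).2
    rcases eq_or_lt_of_le hnle with heq | hlt
    · rw [← heq]
      have hfac : b + ((n : ℝ) - m' + 1 / 2) * (1 - b) ≤
          b + ((n : ℝ) - m + 1 / 2) * (1 - b) := by
        have := mul_le_mul_of_nonneg_right (by linarith : (n : ℝ) - m' + 1 / 2 ≤ (n : ℝ) - m + 1 / 2)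
          (by linarith : (0 : ℝ) ≤ 1 - b)
        linarith
      have hfz : (0 : ℝ) ≤ b ^ n := le_of_lt (zpow_pos hb0 _)
      have := mul_le_mul_of_nonneg_left hfac hfz
      exact mul_le_mul_of_nonneg_left this (le_of_lt (inv_pos.2 h1b))
    · -- n < n'
      have h2 : b ^ n' * (b + ((n' : ℝ) - m' + 1 / 2) * (1 - b)) ≤ b ^ n *
          (b + ((n : ℝ) - m + 1 / 2) * (1 - b)) := by
        have hub : b + ((n' : ℝ) - m' + 1 / 2) * (1 - b) ≤ 1 := by
          have : ((n' : ℝ) - m' + 1 / 2) * (1 - b) ≤ 1 * (1 - b) :=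
            mul_le_mul_of_nonneg_right (by linarith) (by linarith)
          linarith
        have hlb : b ≤ b + ((n : ℝ) - m + 1 / 2) * (1 - b) := by
          have : (0 : ℝ) ≤ ((n : ℝ) - m + 1 / 2) * (1 - b) :=
            mul_nonneg (by linarith) (by linarith)
          linarith
        calc b ^ n' * (b + ((n' : ℝ) - m' + 1 / 2) * (1 - b))
            ≤ b ^ n' * 1 := mul_le_mul_of_nonneg_left hub (le_of_lt (zpow_pos hb0 _))
          _ = b ^ n' := mul_one _
          _ ≤ b ^ (n + 1) := zpow_le_zpow_right_of_le_one₀ hb0 (le_of_lt hb1) (by omega)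
          _ = b ^ n * b := zpow_add_one₀ hbne n
          _ ≤ b ^ n * (b + ((n : ℝ) - m + 1 / 2) * (1 - b)) :=
              mul_le_mul_of_nonneg_left hlb (le_of_lt (zpow_pos hb0 _))
      exact mul_le_mul_of_nonneg_left h2 (le_of_lt (inv_pos.2 h1b))
  · -- functional identity
    intro m
    set n : ℤ := nint m with hn
    set n' : ℤ := nint (-m) with hn'
    obtain ⟨h1, h2⟩ := abs_le.1 (hnint m)
    obtain ⟨h3, h4⟩ := abs_le.1 (hnint (-m))
    have hB : b ^ n ≠ 0 := zpow_ne_zero _ hbne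
    have hcase : n' = -n ∨ n' = -n + 1 ∨ n' = -n - 1 := by
      have hl : (-1 : ℤ) ≤ n' + n := by
        exact_mod_cast (by push_cast; linarith : (-1 : ℝ) ≤ ((n' + n : ℤ) : ℝ))
      have hr : n' + n ≤ (1 : ℤ) := by
        exact_mod_cast (by push_cast; linarith : ((n' + n : ℤ) : ℝ) ≤ 1)
      omega
    rw [hC m, hC (-m), ← hn, ← hn']
    rcases hcase with he | he | he
    · rw [he]
      rw [zpow_neg]
      push_cast
      field_simp
      ring
    · -- n' = -n + 1, so m = n - 1/2
      have hm : m = (n : ℝ) - 1 / 2 := by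
        have : ((n' : ℤ) : ℝ) = -(n : ℝ) + 1 := by rw [he]; push_cast; ring
        rw [this] at h3 h4
        linarith [le_antisymm (by linarith : m ≤ (n : ℝ) - 1 / 2) (by linarith : (n : ℝ) - 1 / 2 ≤ m)]
      rw [he, hm]
      have e1 : b ^ (-n + 1) = (b ^ n)⁻¹ * b := by
        rw [zpow_add_one₀ hbne, zpow_neg]
      rw [e1, zpow_neg]
      push_cast
      field_simp
      ring
    · -- n' = -n - 1, so m = n + 1/2
      have hm : m = (n : ℝ) + 1 / 2 := by
        have : ((n' : ℤ) : ℝ) = -(n : ℝ) - 1 := by rw [he]; push_cast; ring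
        rw [this] at h3 h4
        linarith [le_antisymm (by linarith : m ≤ (n : ℝ) + 1 / 2) (by linarith : (n : ℝ) + 1 / 2 ≤ m)]
      rw [he, hm]
      have e1 : b ^ (-n - 1) = (b ^ n)⁻¹ * b⁻¹ := by
        rw [show -n - 1 = -(n + 1) by ring, zpow_neg, zpow_add_one₀ hbne, mul_inv]
      rw [e1, zpow_neg]
      push_cast
      field_simp
      ring
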